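/- Let V₁, V₂ be doubly commuting pure isometries on H with W = ker V₁* ∩ ker V₂*. Then ker V₁* = ⊕_{n≥0} V₂ⁿ(W); that is, the wandering subspace of V₁ decomposes as the orthogonal direct sum of the images of the joint wandering subspace under powers of V₂. -/

import Mathlib

open scoped InnerProductSpace
open Filter Topology

/-- For doubly commuting pure isometries, the wandering subspace of `V₁`
decomposes as `ker V₁* = ⊕_{n≥0} V₂ⁿ(W)` with `W = ker V₁* ∩ ker V₂*`. -/
theorem wandering_subspace_decomposition_doubly_commuting
    {H : Type*} [NormedAddCommGroup H] [InnerProductSpace ℂ H] [CompleteSpace H]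
    (V₁ V₂ : H →L[ℂ] H) (hV₁ : ∀ x, ‖V₁ x‖ = ‖x‖) (hV₂ : ∀ x, ‖V₂ x‖ = ‖x‖)
    (hcomm : V₁.comp V₂ = V₂.comp V₁)
    (hdc : (ContinuousLinearMap.adjoint V₁).comp V₂
      = V₂.comp (ContinuousLinearMap.adjoint V₁))
    (hpure₁ : ∀ x : H, Tendsto (fun n : ℕ => (V₁ ^ n) ((ContinuousLinearMap.adjoint V₁ ^ n) x))
      atTop (𝓝 0))
    (hpure₂ : ∀ x : H, Tendsto (fun n : ℕ => (V₂ ^ n) ((ContinuousLinearMap.adjoint V₂ ^ n) x))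
      atTop (𝓝 0)) :
    let W := LinearMap.ker ((ContinuousLinearMap.adjoint V₁ : H →L[ℂ] H) : H →ₗ[ℂ] H) ⊓
      LinearMap.ker ((ContinuousLinearMap.adjoint V₂ : H →L[ℂ] H) : H →ₗ[ℂ] H)
    LinearMap.ker ((ContinuousLinearMap.adjoint V₁ : H →L[ℂ] H) : H →ₗ[ℂ] H)
      = (⨆ n : ℕ, W.map ((V₂ ^ n : H →L[ℂ] H) : H →ₗ[ℂ] H)).topologicalClosure ∧
    (∀ n m : ℕ, n ≠ m → ∀ w ∈ W, ∀ w' ∈ W, ⟪(V₂ ^ n) w, (V₂ ^ m) w'⟫_ℂ = 0) := by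
  intro W
  set A₁ := ContinuousLinearMap.adjoint V₁ with hA₁def
  set A₂ := ContinuousLinearMap.adjoint V₂ with hA₂def
  -- the isometry V₂ preserves inner products
  have hinner : ∀ x y : H, ⟪V₂ x, V₂ y⟫_ℂ = ⟪x, y⟫_ℂ := by
    intro x y
    exact (LinearIsometry.mk (V₂ : H →ₗ[ℂ] H) hV₂).inner_map_map x y
  -- A₂ ∘ V₂ = 1
  have hA₂V₂ : ∀ x : H, A₂ (V₂ x) = x := by
    intro x
    apply ext_inner_right ℂ
    intro y
    rw [hA₂def, ContinuousLinearMap.adjoint_inner_left, hinner]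
  -- adjoints commute
  have hadj : ∀ x : H, A₂ (A₁ x) = A₁ (A₂ x) := by
    have h := congrArg ContinuousLinearMap.adjoint hcomm
    rw [ContinuousLinearMap.adjoint_comp, ContinuousLinearMap.adjoint_comp] at h
    intro x
    exact ContinuousLinearMap.ext_iff.mp h x
  -- doubly commuting, pointwise
  have hdc' : ∀ x : H, A₁ (V₂ x) = V₂ (A₁ x) := by
    intro x; exact ContinuousLinearMap.ext_iff.mp hdc x
  -- inner preservation for powers
  have hpres : ∀ (n : ℕ) (x y : H), ⟪(V₂ ^ n) x, (V₂ ^ n) y⟫_ℂ = ⟪x, y⟫_ℂ := by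
    intro n
    induction n with
    | zero => intro x y; simp
    | succ n ih =>
      intro x y
      rw [pow_succ', ContinuousLinearMap.mul_apply, ContinuousLinearMap.mul_apply,
        hinner, ih]
  -- orthogonality to positive powers
  have horth : ∀ w : H, A₂ w = 0 → ∀ (k : ℕ) (x : H), ⟪w, (V₂ ^ (k + 1)) x⟫_ℂ = 0 := by
    intro w hw k x
    rw [pow_succ', ContinuousLinearMap.mul_apply, ← ContinuousLinearMap.adjoint_inner_left,
      ← hA₂def, hw, inner_zero_left]
  -- ker A₁ invariant under powers of V₂
  have hkerV : ∀ (n : ℕ) (w : H), A₁ w = 0 → A₁ ((V₂ ^ n) w) = 0 := by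
    intro n
    induction n with
    | zero => intro w hw; simpa using hw
    | succ n ih =>
      intro w hw
      rw [pow_succ', ContinuousLinearMap.mul_apply, hdc', ih w hw, map_zero]
  -- ker A₁ invariant under powers of A₂
  have hkerA : ∀ (n : ℕ) (x : H), A₁ x = 0 → A₁ ((A₂ ^ n) x) = 0 := by
    intro n
    induction n with
    | zero => intro x hx; simpa using hx
    | succ n ih =>
      intro x hx
      rw [pow_succ', ContinuousLinearMap.mul_apply, ← hadj, ih x hx, map_zero]
  set S : Submodule ℂ H := ⨆ n : ℕ, W.map ((V₂ ^ n : H →L[ℂ] H) : H →ₗ[ℂ] H) with hSdef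
  constructor
  · apply le_antisymm
    · -- hard direction
      intro x hx
      have hx' : A₁ x = 0 := hx
      set s : ℕ → H := fun n => x - (V₂ ^ n) ((A₂ ^ n) x) with hsdef
      have hsS : ∀ n, s n ∈ S := by
        intro n
        induction n with
        | zero => simp [hsdef]
        | succ n ih =>
          have key : s (n + 1) = s n +
              (V₂ ^ n) ((A₂ ^ n) x - V₂ (A₂ ((A₂ ^ n) x))) := by
            simp only [hsdef]
            rw [map_sub]
            have h1 : (V₂ ^ n) (V₂ (A₂ ((A₂ ^ n) x))) = (V₂ ^ (n + 1)) ((A₂ ^ (n + 1)) x) := by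
              rw [pow_succ V₂, ContinuousLinearMap.mul_apply, pow_succ' A₂,
                ContinuousLinearMap.mul_apply]
            rw [h1]
            abel
          rw [key]
          refine S.add_mem ih ?_
          have hy : A₁ ((A₂ ^ n) x) = 0 := hkerA n x hx'
          have hQW : (A₂ ^ n) x - V₂ (A₂ ((A₂ ^ n) x)) ∈ W := by
            refine Submodule.mem_inf.mpr ⟨?_, ?_⟩
            · show A₁ _ = 0
              rw [map_sub, hy, hdc', ← hadj, hy, map_zero, map_zero, sub_zero]
            · show A₂ _ = 0
              rw [map_sub, hA₂V₂, sub_self]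
          exact Submodule.mem_iSup_of_mem n (Submodule.mem_map_of_mem hQW)
      have hs : Tendsto s atTop (𝓝 (x - 0)) :=
        Tendsto.sub (tendsto_const_nhds (x := x)) (hpure₂ x)
      rw [sub_zero] at hs
      rw [← SetLike.mem_coe, Submodule.topologicalClosure_coe]
      exact mem_closure_of_tendsto hs (Eventually.of_forall fun n => hsS n)
    · -- easy direction
      have hle : S ≤ LinearMap.ker (A₁ : H →ₗ[ℂ] H) := by
        refine iSup_le fun n => ?_
        rintro _ ⟨w, hw, rfl⟩
        exact hkerV n w (Submodule.mem_inf.mp hw).1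
      exact Submodule.topologicalClosure_minimal S hle (ContinuousLinearMap.isClosed_ker A₁)
  · intro n m hnm w hw w' hw'
    have hw2 : A₂ w = 0 := (Submodule.mem_inf.mp hw).2
    have hw2' : A₂ w' = 0 := (Submodule.mem_inf.mp hw').2
    rcases lt_or_gt_of_ne hnm with h | h
    · obtain ⟨k, rfl⟩ : ∃ k, m = n + (k + 1) := ⟨m - n - 1, by omega⟩
      have : (V₂ ^ (n + (k + 1))) w' = (V₂ ^ n) ((V₂ ^ (k + 1)) w') := by
        rw [pow_add, ContinuousLinearMap.mul_apply]
      rw [this, hpres, horth w hw2]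
    · obtain ⟨k, rfl⟩ : ∃ k, n = m + (k + 1) := ⟨n - m - 1, by omega⟩
      have : (V₂ ^ (m + (k + 1))) w = (V₂ ^ m) ((V₂ ^ (k + 1)) w) := by
        rw [pow_add, ContinuousLinearMap.mul_apply]
      rw [← inner_conj_symm, this, hpres, horth w' hw2', map_zero]
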